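/- Let X be a Baire metric space. Then dis(X) ≥ Δ(X); that is, X cannot be covered by fewer than Δ(X) discrete subspaces, where Δ(X) is the least cardinality of a non-empty open subset of X. -/

import Mathlib

open Set Cardinal TopologicalSpace

/-- A subset `s` of a topological space is discrete (as a subspace) iff every point of `s`
has an open neighbourhood in the ambient space meeting `s` only in that point. -/
def IsDiscreteSubset {X : Type*} [TopologicalSpace X] (s : Set X) : Prop :=
  ∀ x ∈ s, ∃ U : Set X, IsOpen U ∧ U ∩ s = {x}

/-- `dis X`: the least cardinality of a family of discrete subsets covering `X`. -/
noncomputable def dis (X : Type*) [TopologicalSpace X] : Cardinal :=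
  sInf {c : Cardinal | ∃ 𝒟 : Set (Set X), #𝒟 = c ∧ (∀ D ∈ 𝒟, IsDiscreteSubset D) ∧
    ⋃₀ 𝒟 = Set.univ}

/-- `Delta X`: the dispersion character, i.e. the least cardinality of a nonempty open set. -/
noncomputable def Delta (X : Type*) [TopologicalSpace X] : Cardinal :=
  sInf {c : Cardinal | ∃ U : Set X, IsOpen U ∧ U.Nonempty ∧ #U = c}

theorem statement1 (X : Type*) [MetricSpace X] [BaireSpace X] :
    Delta X ≤ dis X := by
  rcases isEmpty_or_nonempty X with hX | hX
  · have h : {c : Cardinal | ∃ U : Set X, IsOpen U ∧ U.Nonempty ∧ #U = c} = ∅ := by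
      ext c
      simp only [Set.mem_setOf_eq, Set.mem_empty_iff_false, iff_false]
      rintro ⟨U, -, ⟨x, -⟩, -⟩
      exact hX.false x
    have : Delta X = 0 := by
      unfold Delta
      rw [h, Cardinal.sInf_empty]
    rw [this]
    exact zero_le
  · -- X nonempty
    have hne : {c : Cardinal | ∃ 𝒟 : Set (Set X), #𝒟 = c ∧ (∀ D ∈ 𝒟, IsDiscreteSubset D) ∧
        ⋃₀ 𝒟 = Set.univ}.Nonempty := by
      refine ⟨_, Set.range (fun x : X => ({x} : Set X)), rfl, ?_, ?_⟩
      · rintro D ⟨x, rfl⟩ y hy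
        rw [Set.mem_singleton_iff] at hy
        subst hy
        exact ⟨Set.univ, isOpen_univ, by simp⟩
      · ext y
        simp only [Set.mem_sUnion, Set.mem_univ, iff_true]
        exact ⟨{y}, ⟨y, rfl⟩, rfl⟩
    obtain ⟨𝒟, hcard, hdisc, hcover⟩ := csInf_mem hne
    -- choose for each point a discrete set containing it and a separating radius
    have hcov : ∀ x : X, ∃ D : Set X, ∃ r : ℝ, D ∈ 𝒟 ∧ x ∈ D ∧ 0 < r ∧
        ∀ y, y ∈ Metric.ball x r → y ∈ D → y = x := by
      intro x
      have hx : x ∈ ⋃₀ 𝒟 := by rw [hcover]; trivial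
      obtain ⟨Dx, hDx, hxD⟩ := hx
      obtain ⟨U, hUo, hU⟩ := hdisc Dx hDx x hxD
      have hxU : x ∈ U := by
        have : x ∈ U ∩ Dx := by rw [hU]; rfl
        exact this.1
      obtain ⟨ρ, hρ, hball⟩ := Metric.isOpen_iff.1 hUo x hxU
      refine ⟨Dx, ρ, hDx, hxD, hρ, fun y hy hyD => ?_⟩
      have : y ∈ U ∩ Dx := ⟨hball hy, hyD⟩
      rw [hU] at this
      exact this
    choose D r h1 h2 h3 h4 using hcov
    -- Baire category: some closure of a "uniformly separated" layer has interior
    obtain ⟨m, hm⟩ := nonempty_interior_of_iUnion_of_closed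
      (f := fun n : ℕ => closure {x : X | 1 / ((n : ℝ) + 1) < r x})
      (fun n => isClosed_closure)
      (by
        ext x
        simp only [Set.mem_iUnion, Set.mem_univ, iff_true]
        obtain ⟨n, hn⟩ := exists_nat_one_div_lt (h3 x)
        exact ⟨n, subset_closure hn⟩)
    obtain ⟨x₀, hx₀⟩ := hm
    set ε : ℝ := 1 / ((m : ℝ) + 1) with hεdef
    have hεpos : 0 < ε := by positivity
    obtain ⟨δ, hδpos, hδ⟩ := Metric.isOpen_iff.1 isOpen_interior x₀ hx₀
    set ρ : ℝ := min δ (ε / 8) with hρdef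
    have hρpos : 0 < ρ := lt_min hδpos (by positivity)
    set B : Set X := Metric.ball x₀ ρ with hBdef
    have hBsub : B ⊆ closure {x : X | ε < r x} := by
      intro x hx
      exact interior_subset (hδ (Metric.ball_subset_ball (min_le_left _ _) hx))
    set S : Set X := {x : X | ε < r x} ∩ Metric.ball x₀ (2 * ρ) with hSdef
    -- density of S in B
    have hdense : ∀ x ∈ B, ∀ η : ℝ, 0 < η → ∃ s ∈ S, dist x s < η := by
      intro x hx η hη
      have hxc : x ∈ closure {x : X | ε < r x} := hBsub hx
      rw [Metric.mem_closure_iff] at hxc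
      obtain ⟨a, ha, hda⟩ := hxc (min η ρ) (lt_min hη hρpos)
      have h1' : dist a x < ρ := by
        rw [dist_comm]; exact lt_of_lt_of_le hda (min_le_right _ _)
      have h2' : dist x x₀ < ρ := hx
      refine ⟨a, ⟨ha, Metric.mem_ball.2 ?_⟩, lt_of_lt_of_le hda (min_le_left _ _)⟩
      calc dist a x₀ ≤ dist a x + dist x x₀ := dist_triangle _ _ _
        _ < ρ + ρ := add_lt_add h1' h2'
        _ = 2 * ρ := by ring
    -- points of S carrying the same discrete set coincide
    have hSsep : ∀ s ∈ S, ∀ t ∈ S, D s = D t → t = s := by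
      intro s hs t ht hDst
      have h4ρ : 4 * ρ < ε := by
        have := min_le_right δ (ε / 8)
        have : ρ ≤ ε / 8 := this
        linarith
      have hd : dist t s < ε := by
        have hts : dist t x₀ < 2 * ρ := ht.2
        have hss : dist x₀ s < 2 * ρ := by rw [dist_comm]; exact hs.2
        calc dist t s ≤ dist t x₀ + dist x₀ s := dist_triangle _ _ _
          _ < 2 * ρ + 2 * ρ := add_lt_add hts hss
          _ = 4 * ρ := by ring
          _ < ε := h4ρ
      have hball : t ∈ Metric.ball s (r s) := Metric.mem_ball.2 (lt_trans hd hs.1)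
      exact h4 s t hball (hDst ▸ h2 t)
    have hScard : #S ≤ #𝒟 := by
      have hinj : Set.InjOn D S := fun s hs t ht h => (hSsep s hs t ht h).symm
      calc #S = #(D '' S) := (Cardinal.mk_image_eq_of_injOn D S hinj).symm
        _ ≤ #𝒟 := Cardinal.mk_le_mk_of_subset (by rintro _ ⟨x, _, rfl⟩; exact h1 x)
    have hBcard : #B ≤ #𝒟 := by
      by_cases hinf : ℵ₀ ≤ #𝒟
      · -- infinite case: inject B into 𝒟 × S
        have hchoice : ∀ x : B, ∃ s : S, dist (x : X) (s : X) < r (x : X) / 2 := by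
          rintro ⟨x, hx⟩
          obtain ⟨s, hsS, hds⟩ := hdense x hx (r x / 2) (by have := h3 x; positivity)
          exact ⟨⟨s, hsS⟩, hds⟩
        choose f hf using hchoice
        have key : ∀ x y : B, D (x : X) = D (y : X) → ((f x : X) = (f y : X)) →
            r (x : X) ≤ r (y : X) → (x : X) = (y : X) := by
          intro x y hD hs hr
          have hdx := hf x
          have hdy := hf y
          have hxy : dist (x : X) (y : X) < r (y : X) := by
            calc dist (x : X) (y : X)
                ≤ dist (x : X) ((f x : X)) + dist ((f x : X)) (y : X) := dist_triangle _ _ _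
              _ = dist (x : X) ((f x : X)) + dist (y : X) ((f y : X)) := by
                  rw [hs, dist_comm ((f y : X)) (y : X)]
              _ < r (x : X) / 2 + r (y : X) / 2 := add_lt_add hdx hdy
              _ ≤ r (y : X) := by linarith
          exact h4 (y : X) (x : X) (Metric.mem_ball.2 hxy) (hD ▸ h2 (x : X))
        have hginj : Function.Injective
            (fun x : B => ((⟨D (x : X), h1 (x : X)⟩ : 𝒟), f x)) := by
          intro x y hxy
          simp only [Prod.mk.injEq, Subtype.mk.injEq] at hxy
          obtain ⟨hD, hff⟩ := hxy
          have hs : (f x : X) = (f y : X) := by rw [hff]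
          apply Subtype.ext
          rcases le_total (r (x : X)) (r (y : X)) with h | h
          · exact key x y hD hs h
          · exact (key y x hD.symm hs.symm h).symm
        have hle := Cardinal.mk_le_of_injective hginj
        rw [Cardinal.mk_prod, Cardinal.lift_id, Cardinal.lift_id] at hle
        calc #B ≤ #𝒟 * #S := hle
          _ ≤ #𝒟 * #𝒟 := mul_le_mul_right hScard _
          _ = #𝒟 := Cardinal.mul_eq_self hinf
      · -- finite case: S is finite hence closed, and B ⊆ closure S = S
        have hSfin : S.Finite := by
          rw [← Cardinal.lt_aleph0_iff_set_finite]
          exact lt_of_le_of_lt hScard (lt_of_not_ge hinf)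
        have hBS : B ⊆ S := by
          intro x hx
          have hxc : x ∈ closure S :=
            Metric.mem_closure_iff.2 (fun η hη => hdense x hx η hη)
          rwa [hSfin.isClosed.closure_eq] at hxc
        exact le_trans (Cardinal.mk_le_mk_of_subset hBS) hScard
    have hDelta : Delta X ≤ #B :=
      csInf_le' ⟨B, Metric.isOpen_ball, ⟨x₀, Metric.mem_ball_self hρpos⟩, rfl⟩
    calc Delta X ≤ #B := hDelta
      _ ≤ #𝒟 := hBcard
      _ = dis X := hcard
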